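/- Let p ≥ 1, n1 ≥ sk+1 and ni ≥ sk for i = 2,...,p, and let N = n1 + ... + np. The number of s-separated k-subsets of the disjoint union of p circles of sizes n1,...,np that contain the fixed element (1,1) equals C(N - sk - 1, k - 1). -/

import Mathlib

/-- Circular distance between `a` and `b` on a circle of `n` elements labeled `1,...,n`. -/
def circDist (n a b : ℕ) : ℕ := min (max a b - min a b) (n - (max a b - min a b))

/-- The disjoint union of `p` circles, the `i`-th with elements `{1,...,n i}×{i}`. -/
def multiCircles (p : ℕ) (n : ℕ → ℕ) : Finset (ℕ × ℕ) :=
  (Finset.Icc 1 p).biUnion fun i => (Finset.Icc 1 (n i)) ×ˢ ({i} : Finset ℕ)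

/-- A subset of the circles is `s`-separated if no two of its elements lie in the same
circle (the `i`-th circle having `n i` elements) at circular distance at most `s`. -/
def IsSepMulti (n : ℕ → ℕ) (s : ℕ) (A : Finset (ℕ × ℕ)) : Prop :=
  ∀ x ∈ A, ∀ y ∈ A, x ≠ y → x.2 = y.2 → s + 1 ≤ circDist (n x.2) x.1 y.1

lemma circDist_comm (n a b : ℕ) : circDist n a b = circDist n b a := by
  unfold circDist
  rw [max_comm, min_comm a b]

lemma circDist_pair {m s x y : ℕ} (h : x < y) :
    s + 1 ≤ circDist m x y ↔ (x + s + 1 ≤ y ∧ y + s + 1 ≤ m + x) := by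
  unfold circDist
  rw [max_eq_right h.le, min_eq_left h.le]
  omega

open Finset

noncomputable section

/-- Generalized binomial coefficient over ℚ. -/
def ch (x : ℚ) (r : ℕ) : ℚ := (∏ i ∈ Finset.range r, (x - i)) / (r.factorial : ℚ)

lemma ch_zero (x : ℚ) : ch x 0 = 1 := by simp [ch]

lemma ch_one (x : ℚ) : ch x 1 = x := by simp [ch]

lemma ch_pascal (x : ℚ) (r : ℕ) : ch (x + 1) (r + 1) = ch x (r + 1) + ch x r := by
  have h1 : (∏ i ∈ Finset.range (r + 1), (x + 1 - i)) = (x + 1) * ∏ i ∈ Finset.range r, (x - i) := by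
    rw [Finset.prod_range_succ' (fun i => x + 1 - (i : ℕ))]
    simp only [Nat.cast_zero, sub_zero, Nat.cast_add, Nat.cast_one]
    rw [mul_comm]
    congr 1
    apply Finset.prod_congr rfl
    intro i _
    push_cast
    ring
  have h2 : (∏ i ∈ Finset.range (r + 1), (x - i)) = (∏ i ∈ Finset.range r, (x - i)) * (x - r) := by
    rw [Finset.prod_range_succ]
  have hfac : ((r + 1).factorial : ℚ) = (r + 1) * r.factorial := by
    rw [Nat.factorial_succ]; push_cast; ring
  have hf0 : (r.factorial : ℚ) ≠ 0 := by exact_mod_cast r.factorial_ne_zero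
  have hf1 : ((r:ℚ) + 1) ≠ 0 := by positivity
  unfold ch
  rw [h1, h2, hfac]
  field_simp
  ring

lemma ch_nat (t r : ℕ) : ch (t : ℚ) r = (t.choose r : ℚ) := by
  rcases le_or_gt r t with h | h
  · have : (∏ i ∈ Finset.range r, ((t : ℚ) - i)) = (t.descFactorial r : ℚ) := by
      rw [Nat.descFactorial_eq_prod_range]
      rw [Nat.cast_prod]
      apply Finset.prod_congr rfl
      intro i hi
      have : i ≤ t := le_trans (Nat.le_of_lt_succ (Nat.lt_succ_of_lt (Finset.mem_range.mp hi))) (le_trans (Nat.le_of_lt_succ (Nat.lt_succ_self r)) h)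
      rw [Nat.cast_sub this]
    unfold ch
    rw [this, Nat.descFactorial_eq_factorial_mul_choose]
    push_cast
    rw [mul_comm]
    field_simp
  · have h0 : (∏ i ∈ Finset.range r, ((t : ℚ) - i)) = 0 := by
      apply Finset.prod_eq_zero (Finset.mem_range.mpr h)
      simp
    unfold ch
    rw [h0, Nat.choose_eq_zero_of_lt h]
    simp

variable (s : ℕ)

/-- ℚ-version of the "pointed circle"/composition count `C(x - s a - 1, a - 1)`. -/
def Hq (x : ℚ) (a : ℕ) : ℚ := ch (x - (s : ℚ) * a - 1) (a - 1)

/-- ℚ-version of the "free circle" count. -/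
def Pq (y : ℚ) (b : ℕ) : ℚ :=
  if b = 0 then 1 else ch (y - (s : ℚ) * b) b + s * ch (y - (s : ℚ) * b - 1) (b - 1)

lemma ch_arg {x x' : ℚ} (r : ℕ) (h : x = x') : ch x r = ch x' r := by rw [h]

lemma Pq_zero {b : ℕ} (hb : b ≠ 0) : Pq s 0 b = 0 := by
  obtain ⟨b', rfl⟩ : ∃ b', b = b' + 1 := ⟨b - 1, by omega⟩
  have hProd : (∏ i ∈ Finset.range (b' + 1), ((0:ℚ) - (s:ℚ) * (((b'+1:ℕ)):ℚ) - i))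
      = (0 - (s:ℚ) * (((b'+1:ℕ)):ℚ)) * ∏ i ∈ Finset.range b', ((0:ℚ) - (s:ℚ)*(((b'+1:ℕ)):ℚ) - 1 - i) := by
    rw [Finset.prod_range_succ' (fun i => (0:ℚ) - (s:ℚ) * (((b'+1:ℕ)):ℚ) - (i : ℕ))]
    rw [mul_comm]
    simp only [Nat.cast_zero, sub_zero]
    congr 1
    apply Finset.prod_congr rfl
    intro i _
    push_cast; ring
  unfold Pq
  rw [if_neg (by omega : ¬ (b' + 1 = 0))]
  unfold ch
  simp only [Nat.add_sub_cancel]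
  rw [hProd]
  have hfac : ((b' + 1).factorial : ℚ) = ((b':ℚ) + 1) * (b'.factorial : ℚ) := by
    rw [Nat.factorial_succ]; push_cast; ring
  have hf0 : (b'.factorial : ℚ) ≠ 0 := by exact_mod_cast b'.factorial_ne_zero
  have hf1 : ((b':ℚ) + 1) ≠ 0 := by positivity
  rw [hfac]
  field_simp
  push_cast
  ring

lemma Pq_core (X : ℚ) (r : ℕ) :
    ch (X + 1) (r + 2) + (s:ℚ) * ch (X - 1 + 1) (r + 1)
      - (ch X (r + 2) + (s:ℚ) * ch (X - 1) (r + 1))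
      = ch X (r + 1) + (s:ℚ) * ch (X - 1) r := by
  rw [ch_pascal X (r + 1), ch_pascal (X - 1) r]
  ring

lemma Pq_delta (y : ℚ) {b : ℕ} (hb : 1 ≤ b) :
    Pq s (y + 1) b - Pq s y b = Pq s (y - s) (b - 1) := by
  rcases eq_or_lt_of_le hb with hb1 | hb2
  · -- b = 1
    obtain rfl : b = 1 := hb1.symm
    simp only [Pq, Nat.one_ne_zero, if_false]
    norm_num [ch_one, ch_zero]
  · -- b = b'' + 2
    obtain ⟨b'', rfl⟩ : ∃ b'', b = b'' + 2 := ⟨b - 2, by omega⟩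
    have core := Pq_core s (y - (s:ℚ)*((b'':ℚ)+2)) b''
    simp only [Pq, Nat.succ_ne_zero, if_false, Nat.succ_sub_one]
    push_cast
    rw [ch_arg (b''+2) (show y + 1 - (s:ℚ) * ((b'':ℚ) + 2) = (y - (s:ℚ)*((b'':ℚ)+2)) + 1 by ring)]
    rw [ch_arg (b''+1) (show y + 1 - (s:ℚ) * ((b'':ℚ) + 2) - 1 = (y - (s:ℚ)*((b'':ℚ)+2)) - 1 + 1 by ring)]
    rw [ch_arg (b''+1) (show y - (s:ℚ) * ((b'':ℚ) + 2) - 1 = (y - (s:ℚ)*((b'':ℚ)+2)) - 1 by ring)]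
    rw [ch_arg (b''+1) (show y - (s:ℚ) - (s:ℚ) * ((b'':ℚ) + 1) = (y - (s:ℚ)*((b'':ℚ)+2)) by ring)]
    rw [ch_arg b'' (show y - (s:ℚ) - (s:ℚ) * ((b'':ℚ) + 1) - 1 = (y - (s:ℚ)*((b'':ℚ)+2)) - 1 by ring)]
    exact core

lemma Hq_delta (x : ℚ) {j : ℕ} (hj : 2 ≤ j) :
    Hq s (x + 1) j - Hq s x j = Hq s (x - s) (j - 1) := by
  obtain ⟨j', rfl⟩ : ∃ j', j = j' + 2 := ⟨j - 2, by omega⟩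
  unfold Hq
  push_cast
  rw [ch_arg (j'+1) (show x + 1 - (s:ℚ) * ((j':ℚ) + 2) - 1 = (x - (s:ℚ)*((j':ℚ)+2) - 1) + 1 by ring)]
  rw [ch_pascal (x - (s:ℚ)*((j':ℚ)+2) - 1) j']
  rw [ch_arg j' (show x - (s:ℚ) - (s:ℚ) * ((j':ℚ) + 1) - 1 = (x - (s:ℚ)*((j':ℚ)+2) - 1) by ring)]
  ring

lemma main_q : ∀ j : ℕ, 1 ≤ j → ∀ m : ℚ, ∀ N : ℤ,
    ∑ b ∈ Finset.range j, Hq s m (j - b) * Pq s (N : ℚ) b = Hq s (m + N) j := by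
  intro j
  induction j with
  | zero => omega
  | succ j ihj =>
    intro _ m N
    rcases Nat.eq_zero_or_pos j with hj0 | hjpos
    · subst hj0
      simp only [Nat.zero_add, Finset.sum_range_one, Nat.sub_zero]
      unfold Pq Hq
      simp [ch_zero]
    have key : ∀ N : ℤ, (∑ b ∈ Finset.range (j+1), Hq s m (j + 1 - b) * Pq s ((N:ℚ) + 1) b)
        = (∑ b ∈ Finset.range (j+1), Hq s m (j + 1 - b) * Pq s (N : ℚ) b)
          + Hq s (m + N - s) j := by
      intro N
      have hdiff : (∑ b ∈ Finset.range (j+1), Hq s m (j + 1 - b) * Pq s ((N:ℚ) + 1) b)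
          - (∑ b ∈ Finset.range (j+1), Hq s m (j + 1 - b) * Pq s (N : ℚ) b)
          = ∑ b ∈ Finset.range (j+1), Hq s m (j + 1 - b) * (Pq s ((N:ℚ)+1) b - Pq s (N:ℚ) b) := by
        rw [← Finset.sum_sub_distrib]
        apply Finset.sum_congr rfl
        intro b _
        ring
      have hsum : ∑ b ∈ Finset.range (j+1), Hq s m (j + 1 - b) * (Pq s ((N:ℚ)+1) b - Pq s (N:ℚ) b)
          = ∑ b ∈ Finset.range j, Hq s m (j - b) * Pq s ((N:ℚ) - s) b := by
        rw [Finset.sum_range_succ' (fun b => Hq s m (j + 1 - b) * (Pq s ((N:ℚ)+1) b - Pq s (N:ℚ) b))]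
        have h0 : Pq s ((N:ℚ)+1) 0 - Pq s (N:ℚ) 0 = 0 := by simp [Pq]
        rw [h0]
        simp only [mul_zero, add_zero]
        apply Finset.sum_congr rfl
        intro b _
        rw [Pq_delta s (N:ℚ) (by omega : 1 ≤ b + 1)]
        simp only [Nat.add_sub_cancel]
        congr 2
        omega
      have hIH : ∑ b ∈ Finset.range j, Hq s m (j - b) * Pq s ((N:ℚ) - s) b = Hq s (m + N - s) j := by
        have h := ihj hjpos m (N - s)
        rw [show (((N - (s:ℤ)) : ℤ) : ℚ) = (N:ℚ) - (s:ℚ) by push_cast; ring] at h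
        rw [h]
        congr 1
        ring
      have := hdiff
      rw [hsum, hIH] at this
      linarith [this]
    have base : ∑ b ∈ Finset.range (j+1), Hq s m (j + 1 - b) * Pq s ((0:ℤ) : ℚ) b
        = Hq s (m + ((0:ℤ):ℚ)) (j+1) := by
      rw [Finset.sum_range_succ' (fun b => Hq s m (j + 1 - b) * Pq s ((0:ℤ):ℚ) b)]
      have hz : ∀ b : ℕ, b ≠ 0 → Pq s ((0:ℤ):ℚ) b = 0 := by
        intro b hb
        rw [show (((0:ℤ)):ℚ) = 0 by norm_num]
        exact Pq_zero s hb
      rw [Finset.sum_eq_zero (fun b _ => by rw [hz (b+1) (Nat.succ_ne_zero b), mul_zero])]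
      simp [Pq, Hq]
    induction N using Int.induction_on with
    | zero => exact base
    | succ n ihn =>
      have hk := key n
      rw [show ((n:ℤ):ℚ) + 1 = (((n+1 : ℤ)):ℚ) by push_cast; ring] at hk
      rw [hk, ihn]
      have hd := Hq_delta s (m + ((n:ℤ):ℚ)) (by omega : 2 ≤ j + 1)
      simp only [Nat.add_sub_cancel] at hd
      have harg : m + (((n:ℤ)+1 : ℤ):ℚ) = (m + ((n:ℤ):ℚ)) + 1 := by push_cast; ring
      rw [harg]
      linarith [hd]
    | pred n ihn =>
      have hk := key (-(n:ℤ) - 1)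
      rw [show (((-(n:ℤ) - 1 : ℤ)):ℚ) + 1 = (((-(n:ℤ)) : ℤ):ℚ) by push_cast; ring] at hk
      rw [ihn] at hk
      have hd := Hq_delta s (m + (((-(n:ℤ) - 1 : ℤ)):ℚ)) (by omega : 2 ≤ j + 1)
      simp only [Nat.add_sub_cancel] at hd
      have harg : m + (((-(n:ℤ)) : ℤ):ℚ) = (m + (((-(n:ℤ) - 1:ℤ)):ℚ)) + 1 := by push_cast; ring
      rw [harg] at hk
      have hd2 : Hq s (m + (((-(n:ℤ) - 1:ℤ)):ℚ) + 1) (j+1)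
          = Hq s (m + (((-(n:ℤ) - 1:ℤ)):ℚ)) (j+1) + Hq s (m + (((-(n:ℤ) - 1:ℤ)):ℚ) - s) j := by
        linarith [hd]
      rw [hd2] at hk
      have : (∑ b ∈ Finset.range (j+1), Hq s m (j + 1 - b) * Pq s ((((-(n:ℤ) - 1:ℤ))):ℚ) b)
          = Hq s (m + (((-(n:ℤ) - 1:ℤ)):ℚ)) (j+1) := by linarith [hk]
      exact this

end
/-- ℕ-level free-circle count formula. -/
def cycF (s n b : ℕ) : ℕ :=
  if b = 0 then 1 else (n - s*b).choose b + s * ((n - s*b - 1).choose (b-1))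

lemma cast_ch_sub {t c : ℕ} (r : ℕ) (h : c + 1 ≤ t) :
    ((t - c - 1).choose r : ℚ) = ch ((t:ℚ) - (c:ℚ) - 1) r := by
  rw [← ch_nat]
  congr 1
  have h1 : c ≤ t := by omega
  have h2 : 1 ≤ t - c := by omega
  push_cast [Nat.cast_sub h2, Nat.cast_sub h1]
  ring

lemma cast_ch_sub' {t c : ℕ} (r : ℕ) (h : c ≤ t) :
    ((t - c).choose r : ℚ) = ch ((t:ℚ) - (c:ℚ)) r := by
  rw [← ch_nat]
  congr 1
  push_cast [Nat.cast_sub h]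
  ring

lemma identity_nat (s j m nn : ℕ) (hs : 1 ≤ s) (hj : 1 ≤ j)
    (hm : s*j + 1 ≤ m) (hn : s*j ≤ nn) :
    ∑ b ∈ Finset.range j, ((m - s*(j-b) - 1).choose ((j-b) - 1)) * cycF s nn b
      = (m + nn - s*j - 1).choose (j-1) := by
  have hq := main_q s j hj (m : ℚ) (nn : ℤ)
  push_cast at hq
  have hcast : ∀ b ∈ Finset.range j,
      (((m - s*(j-b) - 1).choose ((j-b) - 1) * cycF s nn b : ℕ) : ℚ)
        = Hq s (m:ℚ) (j - b) * Pq s (nn : ℚ) b := by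
    intro b hb
    have hbj : b < j := Finset.mem_range.mp hb
    push_cast
    congr 1
    · -- choose part = Hq
      have ha1 : 1 ≤ j - b := by omega
      have hsa : s * (j - b) ≤ s * j := Nat.mul_le_mul_left s (by omega)
      rw [cast_ch_sub ((j-b)-1) (by omega : s*(j-b) + 1 ≤ m)]
      unfold Hq
      push_cast
      ring_nf
    · -- cycF part = Pq
      rcases Nat.eq_zero_or_pos b with rfl | hbpos
      · simp [cycF, Pq]
      have hsb : s * (b+1) ≤ s * j := Nat.mul_le_mul_left s (by omega)
      have hsb1 : s * b + s ≤ nn := by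
        have : s * (b+1) = s*b + s := by ring
        omega
      unfold cycF Pq
      rw [if_neg (by omega), if_neg (by omega)]
      push_cast
      rw [cast_ch_sub' b (by omega : s*b ≤ nn), cast_ch_sub (b-1) (by omega : s*b + 1 ≤ nn)]
      push_cast
      ring_nf
  have lhs_cast : ((∑ b ∈ Finset.range j, ((m - s*(j-b) - 1).choose ((j-b) - 1)) * cycF s nn b : ℕ) : ℚ)
      = Hq s ((m:ℚ) + (nn:ℚ)) j := by
    push_cast [Nat.cast_sum]
    rw [← hq]
    apply Finset.sum_congr rfl
    intro b hb
    have := hcast b hb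
    push_cast at this ⊢
    exact this
  have rhs_cast : (((m + nn - s*j - 1).choose (j-1) : ℕ) : ℚ)
      = Hq s ((m:ℚ) + (nn:ℚ)) j := by
    rw [cast_ch_sub (j-1) (by omega : s*j + 1 ≤ m + nn)]
    unfold Hq
    push_cast
    ring_nf
  have : ((∑ b ∈ Finset.range j, ((m - s*(j-b) - 1).choose ((j-b) - 1)) * cycF s nn b : ℕ) : ℚ)
      = (((m + nn - s*j - 1).choose (j-1) : ℕ) : ℚ) := by rw [lhs_cast, rhs_cast]
  exact_mod_cast this
open scoped Classical

/-- Linearly `s`-separated finsets of naturals. -/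
def LinSep (s : ℕ) (T : Finset ℕ) : Prop := ∀ x ∈ T, ∀ y ∈ T, x < y → x + s + 1 ≤ y

lemma LinSep.subset {s : ℕ} {T T' : Finset ℕ} (h : LinSep s T) (hsub : T' ⊆ T) :
    LinSep s T' := fun x hx y hy => h x (hsub hx) y (hsub hy)

/-- Number of `b`-element `s`-separated subsets of the interval `[a+1, a+L]`. -/
noncomputable def NL (s a L b : ℕ) : ℕ :=
  (((Finset.Icc (a+1) (a+L)).powerset).filter fun T => T.card = b ∧ LinSep s T).card

lemma NL_b_zero (s a L : ℕ) : NL s a L 0 = 1 := by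
  unfold NL
  have : (((Finset.Icc (a+1) (a+L)).powerset).filter fun T => T.card = 0 ∧ LinSep s T)
      = {∅} := by
    ext T
    simp only [Finset.mem_filter, Finset.mem_powerset, Finset.mem_singleton,
      Finset.card_eq_zero]
    constructor
    · rintro ⟨-, rfl, -⟩; rfl
    · rintro rfl
      refine ⟨Finset.empty_subset _, rfl, ?_⟩
      intro x hx
      simp at hx
  rw [this, Finset.card_singleton]

lemma NL_L_zero (s a b : ℕ) (hb : 1 ≤ b) : NL s a 0 b = 0 := by
  unfold NL
  rw [Finset.card_eq_zero, Finset.filter_eq_empty_iff]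
  intro T hT
  simp only [Finset.mem_powerset, Nat.add_zero] at hT
  have : T = ∅ := by
    rw [← Finset.subset_empty]
    intro x hx
    have := hT hx
    simp only [Finset.mem_Icc] at this
    omega
  subst this
  simp only [Finset.card_empty]
  rintro ⟨h, -⟩
  omega

lemma NL_rec (s a L b : ℕ) : NL s a (L+1) (b+1) = NL s a L (b+1) + NL s a (L - s) b := by
  classical
  set top := a + L + 1 with htop
  have hsplit := Finset.card_filter_add_card_filter_not
    (s := ((Finset.Icc (a+1) (a+L+1)).powerset).filter fun T => T.card = b+1 ∧ LinSep s T)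
    (p := fun T => top ∈ T)
  rw [NL, show a + (L+1) = a + L + 1 by omega, ← hsplit]
  have hnot : ((((Finset.Icc (a+1) (a+L+1)).powerset).filter fun T => T.card = b+1 ∧ LinSep s T).filter
      fun T => ¬ top ∈ T) = ((Finset.Icc (a+1) (a+L)).powerset).filter fun T => T.card = b+1 ∧ LinSep s T := by
    ext T
    simp only [Finset.mem_filter, Finset.mem_powerset]
    constructor
    · rintro ⟨⟨hsub, hc, hl⟩, hnm⟩
      refine ⟨?_, hc, hl⟩
      intro x hx
      have h1 := hsub hx
      simp only [Finset.mem_Icc] at h1 ⊢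
      have : x ≠ top := fun h => hnm (h ▸ hx)
      omega
    · rintro ⟨hsub, hc, hl⟩
      refine ⟨⟨?_, hc, hl⟩, ?_⟩
      · intro x hx
        have := hsub hx
        simp only [Finset.mem_Icc] at this ⊢
        omega
      · intro hmem
        have := hsub hmem
        simp only [Finset.mem_Icc] at this
        omega
  have hyes : ((((Finset.Icc (a+1) (a+L+1)).powerset).filter fun T => T.card = b+1 ∧ LinSep s T).filter
      fun T => top ∈ T).card = NL s a (L - s) b := by
    unfold NL
    apply Finset.card_nbij' (i := fun T => T.erase top) (j := fun Z => insert top Z)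
    · intro T hT
      simp only [Finset.mem_coe, Finset.mem_filter, Finset.mem_powerset] at hT
      obtain ⟨⟨hsub, hc, hl⟩, hmem⟩ := hT
      simp only [Finset.mem_coe, Finset.mem_filter, Finset.mem_powerset]
      refine ⟨?_, ?_, hl.subset (Finset.erase_subset _ _)⟩
      · intro x hx
        rw [Finset.mem_erase] at hx
        obtain ⟨hne, hxT⟩ := hx
        have h1 := hsub hxT
        simp only [Finset.mem_Icc] at h1 ⊢
        have hlt : x < top := by omega
        have := hl x hxT top hmem hlt
        omega
      · rw [Finset.card_erase_of_mem hmem, hc]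
        omega
    · intro Z hZ
      simp only [Finset.mem_coe, Finset.mem_filter, Finset.mem_powerset] at hZ
      obtain ⟨hsub, hc, hl⟩ := hZ
      have htopnm : top ∉ Z := by
        intro h
        have := hsub h
        simp only [Finset.mem_Icc] at this
        omega
      simp only [Finset.mem_coe, Finset.mem_filter, Finset.mem_powerset]
      refine ⟨⟨?_, ?_, ?_⟩, Finset.mem_insert_self _ _⟩
      · intro x hx
        rw [Finset.mem_insert] at hx
        rcases hx with rfl | hx
        · simp only [Finset.mem_Icc]; omega
        · have := hsub hx
          simp only [Finset.mem_Icc] at this ⊢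
          omega
      · rw [Finset.card_insert_of_notMem htopnm, hc]
      · intro x hx y hy hxy
        rw [Finset.mem_insert] at hx hy
        rcases hx with rfl | hx <;> rcases hy with rfl | hy
        · omega
        · -- x = top < y impossible
          have := hsub hy
          simp only [Finset.mem_Icc] at this
          omega
        · have := hsub hx
          simp only [Finset.mem_Icc] at this
          omega
        · exact hl x hx y hy hxy
    · intro T hT
      simp only [Finset.mem_coe, Finset.mem_filter] at hT
      exact Finset.insert_erase hT.2
    · intro Z hZ
      simp only [Finset.mem_coe, Finset.mem_filter, Finset.mem_powerset] at hZ
      apply Finset.erase_insert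
      intro h
      have := hZ.1 h
      simp only [Finset.mem_Icc] at this
      omega
  rw [hyes, hnot]
  rw [Nat.add_comm]
  rfl

lemma NL_eq (s a L b : ℕ) : NL s a L b = (L - s*(b-1)).choose b := by
  induction b generalizing L with
  | zero => simpa using NL_b_zero s a L
  | succ b ihb =>
    induction L with
    | zero =>
      rw [NL_L_zero s a (b+1) (by omega)]
      rw [Nat.choose_eq_zero_of_lt (by omega : 0 - s*(b+1-1) < b + 1)]
    | succ L ihL =>
      rw [NL_rec, ihL, ihb]
      simp only [Nat.add_sub_cancel]
      rcases Nat.eq_zero_or_pos b with rfl | hbpos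
      · simp
      obtain ⟨b', rfl⟩ : ∃ b', b = b' + 1 := ⟨b - 1, by omega⟩
      have hmul : s * (b' + 1) = s * b' + s := Nat.mul_succ s b'
      simp only [Nat.add_sub_cancel]
      set t := s * b' with ht
      rcases le_or_gt (t + s) L with hle | hlt
      · rw [show L + 1 - s * (b'+1) = (L - s * (b'+1)) + 1 by omega]
        rw [Nat.choose_succ_succ' (L - s * (b'+1)) (b'+1)]
        rw [show L - s - t = L - s * (b'+1) by omega]
        omega
      · rw [Nat.choose_eq_zero_of_lt (by omega : L + 1 - s * (b'+1) < b' + 2)]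
        rw [Nat.choose_eq_zero_of_lt (by omega : L - s * (b'+1) < b' + 2)]
        rw [Nat.choose_eq_zero_of_lt (by omega : L - s - t < b' + 1)]
/-- Cyclically `s`-separated subsets of `{1,...,m}`. -/
def CycSep (s m : ℕ) (Y : Finset ℕ) : Prop :=
  ∀ x ∈ Y, ∀ y ∈ Y, x ≠ y → s + 1 ≤ circDist m x y

lemma CycSep.pair {s m : ℕ} {Y : Finset ℕ} (h : CycSep s m Y) {x y : ℕ}
    (hx : x ∈ Y) (hy : y ∈ Y) (hxy : x < y) :
    x + s + 1 ≤ y ∧ y + s + 1 ≤ m + x :=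
  (circDist_pair hxy).mp (h x hx y hy (by omega))

lemma cycSep_of_pairs {s m : ℕ} {Y : Finset ℕ}
    (h : ∀ x ∈ Y, ∀ y ∈ Y, x < y → x + s + 1 ≤ y ∧ y + s + 1 ≤ m + x) :
    CycSep s m Y := by
  intro x hx y hy hxy
  rcases Nat.lt_or_ge x y with hlt | hge
  · exact (circDist_pair hlt).mpr (h x hx y hy hlt)
  · have hlt : y < x := by omega
    rw [circDist_comm]
    exact (circDist_pair hlt).mpr (h y hy x hx hlt)

noncomputable def CCset (s m b : ℕ) : Finset (Finset ℕ) :=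
  (Finset.Icc 1 m).powerset.filter fun Y => Y.card = b ∧ CycSep s m Y

noncomputable def CC (s m b : ℕ) : ℕ := (CCset s m b).card

noncomputable def PC (s m k : ℕ) : ℕ :=
  ((Finset.Icc 1 m).powerset.filter fun Y => Y.card = k ∧ CycSep s m Y ∧ 1 ∈ Y).card

lemma sum_range_choose_eq (K r : ℕ) : ∑ i ∈ Finset.range K, i.choose r = K.choose (r+1) := by
  induction K with
  | zero => simp
  | succ K ih =>
    rw [Finset.sum_range_succ, ih, Nat.choose_succ_succ K r, Nat.add_comm]

/-- Pointed circle count. -/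
lemma PC_eq (s m k : ℕ) (hs : 1 ≤ s) (hk : 1 ≤ k) (hm : s*k + 1 ≤ m) :
    PC s m k = (m - s*k - 1).choose (k-1) := by
  have hbij : PC s m k = NL s (s+1) (m - (2*s+1)) (k-1) := by
    unfold PC NL
    apply Finset.card_nbij' (i := fun Y => Y.erase 1) (j := fun Z => insert 1 Z)
    · intro Y hY
      simp only [Finset.mem_coe, Finset.mem_filter, Finset.mem_powerset] at hY
      obtain ⟨hsub, hc, hcyc, h1⟩ := hY
      simp only [Finset.mem_coe, Finset.mem_filter, Finset.mem_powerset]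
      refine ⟨?_, ?_, ?_⟩
      · intro x hx
        rw [Finset.mem_erase] at hx
        obtain ⟨hne, hxY⟩ := hx
        have hx1 : 1 ≤ x ∧ x ≤ m := by
          have := hsub hxY; simp only [Finset.mem_Icc] at this; exact this
        have hlt : 1 < x := by omega
        have := hcyc.pair h1 hxY hlt
        simp only [Finset.mem_Icc]
        omega
      · rw [Finset.card_erase_of_mem h1, hc]
      · intro x hx y hy hxy
        rw [Finset.mem_erase] at hx hy
        exact (hcyc.pair hx.2 hy.2 hxy).1
    · intro Z hZ
      simp only [Finset.mem_coe, Finset.mem_filter, Finset.mem_powerset] at hZ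
      obtain ⟨hsub, hc, hlin⟩ := hZ
      have hZmem : ∀ z ∈ Z, s + 2 ≤ z ∧ z ≤ s + 1 + (m - (2*s+1)) := by
        intro z hz
        have := hsub hz; simp only [Finset.mem_Icc] at this; omega
      have h1Z : 1 ∉ Z := by
        intro h
        have := hZmem 1 h
        omega
      simp only [Finset.mem_coe, Finset.mem_filter, Finset.mem_powerset]
      refine ⟨?_, ?_, ?_, Finset.mem_insert_self _ _⟩
      · intro x hx
        rw [Finset.mem_insert] at hx
        simp only [Finset.mem_Icc]
        rcases hx with rfl | hx
        · have : 0 < s * k := Nat.mul_pos (by omega) (by omega)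
          omega
        · have := hZmem x hx
          omega
      · rw [Finset.card_insert_of_notMem h1Z, hc]
        omega
      · apply cycSep_of_pairs
        intro x hx y hy hxy
        rw [Finset.mem_insert] at hx hy
        rcases hx with rfl | hx <;> rcases hy with rfl | hy
        · omega
        · have := hZmem y hy
          omega
        · have := hZmem x hx
          omega
        · have h1 := hlin x hx y hy hxy
          have h2 := hZmem x hx
          have h3 := hZmem y hy
          omega
    · intro Y hY
      simp only [Finset.mem_coe, Finset.mem_filter] at hY
      exact Finset.insert_erase hY.2.2.2
    · intro Z hZ
      simp only [Finset.mem_coe, Finset.mem_filter, Finset.mem_powerset] at hZ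
      apply Finset.erase_insert
      intro h
      have := hZ.1 h
      simp only [Finset.mem_Icc] at this
      omega
  rw [hbij, NL_eq]
  rcases Nat.lt_or_ge k 2 with hk1 | hk2
  · obtain rfl : k = 1 := by omega
    norm_num
  · obtain ⟨k', rfl⟩ : ∃ k', k = k' + 2 := ⟨k - 2, by omega⟩
    have hmul : s * (k' + 2) = s * k' + 2 * s := by ring
    congr 1
    rw [show k' + 2 - 1 - 1 = k' by omega]
    omega

lemma CC_zero (s m : ℕ) : CC s m 0 = 1 := by
  unfold CC CCset
  have : ((Finset.Icc 1 m).powerset.filter fun Y => Y.card = 0 ∧ CycSep s m Y) = {∅} := by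
    ext Y
    simp only [Finset.mem_filter, Finset.mem_powerset, Finset.mem_singleton, Finset.card_eq_zero]
    constructor
    · rintro ⟨-, rfl, -⟩; rfl
    · rintro rfl
      refine ⟨Finset.empty_subset _, rfl, ?_⟩
      intro x hx
      simp at hx
  rw [this, Finset.card_singleton]

lemma CC_one (s m : ℕ) : CC s m 1 = m := by
  unfold CC CCset
  have : ((Finset.Icc 1 m).powerset.filter fun Y => Y.card = 1 ∧ CycSep s m Y)
      = (Finset.Icc 1 m).image (fun a => ({a} : Finset ℕ)) := by
    ext Y
    simp only [Finset.mem_filter, Finset.mem_powerset, Finset.mem_image]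
    constructor
    · rintro ⟨hsub, hc, -⟩
      obtain ⟨a, rfl⟩ := Finset.card_eq_one.mp hc
      exact ⟨a, hsub (Finset.mem_singleton_self a), rfl⟩
    · rintro ⟨a, ha, rfl⟩
      refine ⟨Finset.singleton_subset_iff.mpr ha, Finset.card_singleton a, ?_⟩
      intro x hx y hy hxy
      rw [Finset.mem_singleton] at hx hy
      omega
  rw [this, Finset.card_image_of_injective _ Finset.singleton_injective, Nat.card_Icc]
  omega
lemma CC_eq (s m b : ℕ) (hs : 1 ≤ s) (hb : 2 ≤ b) (hm : s*(b+1) ≤ m) :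
    CC s m b = (m - s*b).choose b + s * ((m - s*b - 1).choose (b-1)) := by
  have hm3 : 3*s ≤ m := by
    have : s * 3 ≤ s * (b+1) := Nat.mul_le_mul_left s (by omega)
    omega
  -- the min element map
  have hmaps : ∀ Y ∈ CCset s m b, WithTop.untopD 0 Y.min ∈ Finset.Icc 1 m := by
    intro Y hY
    simp only [CCset, Finset.mem_filter, Finset.mem_powerset] at hY
    have hne : Y.Nonempty := Finset.card_pos.mp (by omega)
    rw [← Finset.coe_min' hne, WithTop.untopD_coe]
    exact hY.1 (Finset.min'_mem Y hne)
  have fib : ∀ y ∈ Finset.Icc 1 m,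
      ((CCset s m b).filter (fun Y => WithTop.untopD 0 Y.min = y)).card
        = NL s (y+s) ((min (y + m - (s+1)) m) - (y+s)) (b-1) := by
    intro y hy
    simp only [Finset.mem_Icc] at hy
    set U := min (y + m - (s+1)) m with hU
    have hU1 : U ≤ y + m - (s+1) := min_le_left _ _
    have hU2 : U ≤ m := min_le_right _ _
    unfold NL
    apply Finset.card_nbij' (i := fun Y => Y.erase y) (j := fun Z => insert y Z)
    · intro Y hY
      simp only [Finset.mem_coe, CCset, Finset.mem_filter, Finset.mem_powerset] at hY
      obtain ⟨⟨hsub, hc, hcyc⟩, hfy⟩ := hY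
      have hne : Y.Nonempty := Finset.card_pos.mp (by omega)
      have hymem : y ∈ Y := by
        rw [← Finset.coe_min' hne, WithTop.untopD_coe] at hfy
        rw [← hfy]; exact Finset.min'_mem Y hne
      have hmin : ∀ x ∈ Y, y ≤ x := by
        intro x hx
        rw [← Finset.coe_min' hne, WithTop.untopD_coe] at hfy
        rw [← hfy]; exact Finset.min'_le Y x hx
      simp only [Finset.mem_coe, Finset.mem_filter, Finset.mem_powerset]
      refine ⟨?_, ?_, ?_⟩
      · intro x hx
        rw [Finset.mem_erase] at hx
        obtain ⟨hne', hxY⟩ := hx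
        have hlt : y < x := by
          have := hmin x hxY; omega
        have hp := hcyc.pair hymem hxY hlt
        have hxm : x ≤ m := by
          have := hsub hxY; simp only [Finset.mem_Icc] at this; omega
        have hxU : x ≤ U := le_min (by omega) (by omega)
        simp only [Finset.mem_Icc]
        omega
      · rw [Finset.card_erase_of_mem hymem, hc]
      · intro u hu v hv huv
        rw [Finset.mem_erase] at hu hv
        exact (hcyc.pair hu.2 hv.2 huv).1
    · intro Z hZ
      simp only [Finset.mem_coe, Finset.mem_filter, Finset.mem_powerset] at hZ
      obtain ⟨hsub, hc, hlin⟩ := hZ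
      have hZmem : ∀ z ∈ Z, y + s + 1 ≤ z ∧ z ≤ U := by
        intro z hz
        have := hsub hz; simp only [Finset.mem_Icc] at this
        omega
      have hyZ : y ∉ Z := by
        intro h; have := hZmem y h; omega
      simp only [Finset.mem_coe, CCset, Finset.mem_filter, Finset.mem_powerset]
      refine ⟨⟨?_, ?_, ?_⟩, ?_⟩
      · intro x hx
        rw [Finset.mem_insert] at hx
        simp only [Finset.mem_Icc]
        rcases hx with rfl | hx
        · omega
        · have := hZmem x hx; omega
      · rw [Finset.card_insert_of_notMem hyZ, hc]
        omega
      · apply cycSep_of_pairs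
        intro u hu v hv huv
        rw [Finset.mem_insert] at hu hv
        rcases hu with rfl | hu <;> rcases hv with rfl | hv
        · omega
        · have := hZmem v hv; omega
        · have := hZmem u hu; omega
        · have h1 := hlin u hu v hv huv
          have h2 := hZmem u hu
          have h3 := hZmem v hv
          omega
      · have hmin : (insert y Z).min = (y : WithTop ℕ) := by
          rw [Finset.min_insert]
          have hle : (y : WithTop ℕ) ≤ Z.min := by
            apply Finset.le_min
            intro z hz
            have hyz : y ≤ z := by have := hZmem z hz; omega
            exact WithTop.coe_le_coe.mpr hyz
          exact min_eq_left hle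
        rw [hmin]
        rfl
    · intro Y hY
      simp only [Finset.mem_coe, Finset.mem_filter] at hY
      obtain ⟨hmem, hfy⟩ := hY
      simp only [CCset, Finset.mem_filter, Finset.mem_powerset] at hmem
      have hne : Y.Nonempty := Finset.card_pos.mp (by omega)
      have hymem : y ∈ Y := by
        rw [← Finset.coe_min' hne, WithTop.untopD_coe] at hfy
        rw [← hfy]; exact Finset.min'_mem Y hne
      exact Finset.insert_erase hymem
    · intro Z hZ
      simp only [Finset.mem_coe, Finset.mem_filter, Finset.mem_powerset] at hZ
      apply Finset.erase_insert
      intro h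
      have := hZ.1 h
      simp only [Finset.mem_Icc] at this
      omega
  have step1 : CC s m b = ∑ y ∈ Finset.Icc 1 m,
      NL s (y+s) ((min (y + m - (s+1)) m) - (y+s)) (b-1) := by
    unfold CC
    rw [Finset.card_eq_sum_card_fiberwise hmaps]
    exact Finset.sum_congr rfl fib
  obtain ⟨b'', rfl⟩ : ∃ b'', b = b'' + 2 := ⟨b - 2, by omega⟩
  have hrel : s * (b'' + 2) = s * b'' + 2 * s := by ring
  have hrel2 : s * (b'' + 2 + 1) = s * b'' + 3 * s := by ring
  set t := s * b'' with ht
  have hmt : t + 3 * s ≤ m := by omega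
  rw [step1]
  have hterm : ∀ y ∈ Finset.Icc 1 m,
      NL s (y+s) ((min (y + m - (s+1)) m) - (y+s)) (b''+2-1)
        = ((min (y + m - (s+1)) m - (y+s)) - t).choose (b''+1) := by
    intro y hy
    rw [show b'' + 2 - 1 = b'' + 1 by omega, NL_eq]
    congr 2 <;> omega
  rw [Finset.sum_congr rfl hterm]
  have hsplit : Finset.Icc 1 m = Finset.Ioc 0 m := by
    ext x; simp only [Finset.mem_Icc, Finset.mem_Ioc]; omega
  rw [hsplit, ← Finset.sum_Ioc_consecutive _ (show (0:ℕ) ≤ s by omega) (show s ≤ m by omega)]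
  have hsum1 : ∑ y ∈ Finset.Ioc 0 s, ((min (y + m - (s+1)) m - (y+s)) - t).choose (b''+1)
      = s * ((m - (t + 2*s) - 1).choose (b''+1)) := by
    have hc : ∀ y ∈ Finset.Ioc 0 s, ((min (y + m - (s+1)) m - (y+s)) - t).choose (b''+1)
        = (m - (t + 2*s) - 1).choose (b''+1) := by
      intro y hy
      simp only [Finset.mem_Ioc] at hy
      rw [min_eq_left (by omega : y + m - (s+1) ≤ m)]
      congr 1
      omega
    rw [Finset.sum_congr rfl hc, Finset.sum_const, Nat.card_Ioc, Nat.sub_zero, smul_eq_mul]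
  have hsum2 : ∑ y ∈ Finset.Ioc s m, ((min (y + m - (s+1)) m - (y+s)) - t).choose (b''+1)
      = (m - (t + 2*s)).choose (b''+2) := by
    have hc : ∀ y ∈ Finset.Ioc s m, ((min (y + m - (s+1)) m - (y+s)) - t).choose (b''+1)
        = ((m - y) - (s + t)).choose (b''+1) := by
      intro y hy
      simp only [Finset.mem_Ioc] at hy
      rw [min_eq_right (by omega : m ≤ y + m - (s+1))]
      congr 1
      omega
    rw [Finset.sum_congr rfl hc]
    have hbij : ∑ y ∈ Finset.Ioc s m, ((m - y) - (s + t)).choose (b''+1)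
        = ∑ c ∈ Finset.Ico 0 (m - s), (c - (s + t)).choose (b''+1) := by
      apply Finset.sum_nbij' (i := fun y => m - y) (j := fun c => m - c)
      · intro y hy
        simp only [Finset.mem_Ioc] at hy
        simp only [Finset.mem_Ico]
        omega
      · intro c hc
        simp only [Finset.mem_Ico] at hc
        simp only [Finset.mem_Ioc]
        omega
      · intro y hy
        simp only [Finset.mem_Ioc] at hy
        omega
      · intro c hc
        simp only [Finset.mem_Ico] at hc
        omega
      · intro y hy
        rfl
    rw [hbij]
    rw [← Finset.sum_Ico_consecutive _ (show (0:ℕ) ≤ s + t by omega)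
      (show s + t ≤ m - s by omega)]
    have hz : ∑ c ∈ Finset.Ico 0 (s+t), (c - (s + t)).choose (b''+1) = 0 := by
      apply Finset.sum_eq_zero
      intro c hc
      simp only [Finset.mem_Ico] at hc
      rw [show c - (s + t) = 0 by omega]
      exact Nat.choose_eq_zero_of_lt (by omega)
    rw [hz, Nat.zero_add, Finset.sum_Ico_eq_sum_range]
    have hc2 : ∀ i ∈ Finset.range (m - s - (s + t)), ((s + t + i) - (s + t)).choose (b''+1)
        = i.choose (b''+1) := by
      intro i _
      congr 1
      omega
    rw [Finset.sum_congr rfl hc2, sum_range_choose_eq]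
    congr 1
    omega
  rw [hsum1, hsum2]
  rw [show m - s * (b''+2) = m - (t + 2*s) by omega]
  rw [show b'' + 2 - 1 = b'' + 1 by omega]
  exact Nat.add_comm _ _
lemma mem_multiCircles {p : ℕ} {n : ℕ → ℕ} {x : ℕ × ℕ} :
    x ∈ multiCircles p n ↔ 1 ≤ x.2 ∧ x.2 ≤ p ∧ 1 ≤ x.1 ∧ x.1 ≤ n x.2 := by
  unfold multiCircles
  simp only [Finset.mem_biUnion, Finset.mem_Icc, Finset.mem_product, Finset.mem_singleton]
  constructor
  · rintro ⟨i, ⟨h1, h2⟩, ⟨h3, h4⟩, h5⟩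
    subst h5
    exact ⟨h1, h2, h3, h4⟩
  · rintro ⟨h1, h2, h3, h4⟩
    exact ⟨x.2, ⟨h1, h2⟩, ⟨h3, h4⟩, rfl⟩

lemma IsSepMulti.subset {n : ℕ → ℕ} {s : ℕ} {A B : Finset (ℕ × ℕ)}
    (h : IsSepMulti n s B) (hAB : A ⊆ B) : IsSepMulti n s A :=
  fun x hx y hy => h x (hAB hx) y (hAB hy)

lemma card_circleSep (sv : ℕ) (n : ℕ → ℕ) (i0 m b : ℕ) (hm : n i0 = m) :
    (((Finset.Icc 1 m) ×ˢ ({i0} : Finset ℕ)).powerset.filter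
      fun B => B.card = b ∧ IsSepMulti n sv B).card = CC sv m b := by
  unfold CC CCset
  apply Finset.card_nbij' (i := fun B => B.image Prod.fst)
    (j := fun Y => Y.image (fun a => (a, i0)))
  · intro B hB
    simp only [Finset.mem_coe, Finset.mem_filter, Finset.mem_powerset] at hB
    obtain ⟨hsub, hc, hsep⟩ := hB
    have hB2 : ∀ x ∈ B, x.2 = i0 ∧ 1 ≤ x.1 ∧ x.1 ≤ m := by
      intro x hx
      have := hsub hx
      simp only [Finset.mem_product, Finset.mem_Icc, Finset.mem_singleton] at this
      tauto
    simp only [Finset.mem_coe, Finset.mem_filter, Finset.mem_powerset]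
    refine ⟨?_, ?_, ?_⟩
    · intro a ha
      rw [Finset.mem_image] at ha
      obtain ⟨x, hx, rfl⟩ := ha
      have := hB2 x hx
      simp only [Finset.mem_Icc]
      omega
    · rw [Finset.card_image_of_injOn, hc]
      intro x hx y hy hxy
      have h1 := (hB2 x hx).1
      have h2 := (hB2 y hy).1
      exact Prod.ext hxy (h1.trans h2.symm)
    · intro a ha c hc hac
      rw [Finset.mem_image] at ha hc
      obtain ⟨x, hx, rfl⟩ := ha
      obtain ⟨y, hy, rfl⟩ := hc
      have h1 := (hB2 x hx).1
      have h2 := (hB2 y hy).1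
      have := hsep x hx y hy (by intro h; exact hac (by rw [h])) (h1.trans h2.symm)
      rwa [h1, hm] at this
  · intro Y hY
    simp only [Finset.mem_coe, Finset.mem_filter, Finset.mem_powerset] at hY
    obtain ⟨hsub, hc, hcyc⟩ := hY
    simp only [Finset.mem_coe, Finset.mem_filter, Finset.mem_powerset]
    refine ⟨?_, ?_, ?_⟩
    · intro x hx
      rw [Finset.mem_image] at hx
      obtain ⟨a, ha, rfl⟩ := hx
      simp only [Finset.mem_product, Finset.mem_singleton]
      exact ⟨hsub ha, by trivial⟩
    · rw [Finset.card_image_of_injective _ (fun a c h => by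
        simpa using congrArg Prod.fst h), hc]
    · intro x hx y hy hxy htag
      rw [Finset.mem_image] at hx hy
      obtain ⟨a, ha, rfl⟩ := hx
      obtain ⟨c, hc2, rfl⟩ := hy
      have hac : a ≠ c := by
        intro h; exact hxy (by rw [h])
      have := hcyc a ha c hc2 hac
      simpa [hm] using this
  · intro B hB
    simp only [Finset.mem_coe, Finset.mem_filter, Finset.mem_powerset] at hB
    have hB2 : ∀ x ∈ B, x.2 = i0 := by
      intro x hx
      have := hB.1 hx
      simp only [Finset.mem_product, Finset.mem_singleton] at this
      tauto
    dsimp only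
    rw [Finset.image_image]
    rw [show ((fun a => (a, i0)) ∘ Prod.fst) = (fun x : ℕ × ℕ => (x.1, i0)) from rfl]
    have : B.image (fun x : ℕ × ℕ => (x.1, i0)) = B.image id := by
      apply Finset.image_congr
      intro x hx
      simp only [id]
      exact Prod.ext rfl (hB2 x hx).symm
    rw [this, Finset.image_id]
  · intro Y _
    dsimp only
    rw [Finset.image_image]
    rw [show (Prod.fst ∘ (fun a : ℕ => (a, i0))) = id from rfl, Finset.image_id]

lemma card_circlePointed (sv : ℕ) (n : ℕ → ℕ) (m k : ℕ) (hm : n 1 = m) :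
    (((Finset.Icc 1 m) ×ˢ ({1} : Finset ℕ)).powerset.filter
      fun A => A.card = k ∧ IsSepMulti n sv A ∧ (1,1) ∈ A).card = PC sv m k := by
  unfold PC
  apply Finset.card_nbij' (i := fun B => B.image Prod.fst)
    (j := fun Y => Y.image (fun a => (a, 1)))
  · intro B hB
    simp only [Finset.mem_coe, Finset.mem_filter, Finset.mem_powerset] at hB
    obtain ⟨hsub, hc, hsep, hone⟩ := hB
    have hB2 : ∀ x ∈ B, x.2 = 1 ∧ 1 ≤ x.1 ∧ x.1 ≤ m := by
      intro x hx
      have := hsub hx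
      simp only [Finset.mem_product, Finset.mem_Icc, Finset.mem_singleton] at this
      tauto
    simp only [Finset.mem_coe, Finset.mem_filter, Finset.mem_powerset]
    refine ⟨?_, ?_, ?_, ?_⟩
    · intro a ha
      rw [Finset.mem_image] at ha
      obtain ⟨x, hx, rfl⟩ := ha
      have := hB2 x hx
      simp only [Finset.mem_Icc]
      omega
    · rw [Finset.card_image_of_injOn, hc]
      intro x hx y hy hxy
      have h1 := (hB2 x hx).1
      have h2 := (hB2 y hy).1
      exact Prod.ext hxy (h1.trans h2.symm)
    · intro a ha c hc hac
      rw [Finset.mem_image] at ha hc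
      obtain ⟨x, hx, rfl⟩ := ha
      obtain ⟨y, hy, rfl⟩ := hc
      have h1 := (hB2 x hx).1
      have h2 := (hB2 y hy).1
      have := hsep x hx y hy (by intro h; exact hac (by rw [h])) (h1.trans h2.symm)
      rwa [h1, hm] at this
    · rw [Finset.mem_image]
      exact ⟨(1,1), hone, rfl⟩
  · intro Y hY
    simp only [Finset.mem_coe, Finset.mem_filter, Finset.mem_powerset] at hY
    obtain ⟨hsub, hc, hcyc, hone⟩ := hY
    simp only [Finset.mem_coe, Finset.mem_filter, Finset.mem_powerset]
    refine ⟨?_, ?_, ?_, ?_⟩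
    · intro x hx
      rw [Finset.mem_image] at hx
      obtain ⟨a, ha, rfl⟩ := hx
      simp only [Finset.mem_product, Finset.mem_singleton]
      exact ⟨hsub ha, by trivial⟩
    · rw [Finset.card_image_of_injective _ (fun a c h => by
        simpa using congrArg Prod.fst h), hc]
    · intro x hx y hy hxy htag
      rw [Finset.mem_image] at hx hy
      obtain ⟨a, ha, rfl⟩ := hx
      obtain ⟨c, hc2, rfl⟩ := hy
      have hac : a ≠ c := by
        intro h; exact hxy (by rw [h])
      have := hcyc a ha c hc2 hac
      simpa [hm] using this
    · rw [Finset.mem_image]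
      exact ⟨1, hone, rfl⟩
  · intro B hB
    simp only [Finset.mem_coe, Finset.mem_filter, Finset.mem_powerset] at hB
    have hB2 : ∀ x ∈ B, x.2 = 1 := by
      intro x hx
      have := hB.1 hx
      simp only [Finset.mem_product, Finset.mem_singleton] at this
      tauto
    dsimp only
    rw [Finset.image_image]
    have : B.image ((fun a : ℕ => (a, 1)) ∘ Prod.fst) = B.image id := by
      apply Finset.image_congr
      intro x hx
      simp only [id, Function.comp]
      exact Prod.ext rfl (hB2 x hx).symm
    rw [this, Finset.image_id]
  · intro Y _
    dsimp only
    rw [Finset.image_image]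
    rw [show (Prod.fst ∘ (fun a : ℕ => (a, 1))) = id from rfl, Finset.image_id]

lemma multiCircles_succ (p : ℕ) (n : ℕ → ℕ) :
    multiCircles (p+1) n = multiCircles p n ∪ ((Finset.Icc 1 (n (p+1))) ×ˢ ({p+1} : Finset ℕ)) := by
  unfold multiCircles
  rw [show Finset.Icc 1 (p+1) = insert (p+1) (Finset.Icc 1 p) by
    ext x; simp only [Finset.mem_Icc, Finset.mem_insert]; omega]
  rw [Finset.biUnion_insert]
  exact Finset.union_comm _ _

noncomputable def ES (s : ℕ) (n : ℕ → ℕ) (p k : ℕ) : Finset (Finset (ℕ × ℕ)) :=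
  (multiCircles p n).powerset.filter fun A => A.card = k ∧ IsSepMulti n s A ∧ (1,1) ∈ A

lemma ES_card (s : ℕ) (hs : 1 ≤ s) (n : ℕ → ℕ) :
    ∀ p, 1 ≤ p → ∀ k, 1 ≤ k → s * k + 1 ≤ n 1 → (∀ i, 2 ≤ i → i ≤ p → s * k ≤ n i) →
    (ES s n p k).card = ((∑ i ∈ Finset.Icc 1 p, n i) - s*k - 1).choose (k-1) := by
  intro p
  induction p with
  | zero => omega
  | succ p ih =>
    intro _ k hk h1 hi
    rcases Nat.eq_zero_or_pos p with rfl | hppos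
    · -- base case : one circle
      have hone : multiCircles 1 n = (Finset.Icc 1 (n 1)) ×ˢ ({1} : Finset ℕ) := by
        unfold multiCircles
        rw [Finset.Icc_self, Finset.singleton_biUnion]
      rw [show (ES s n 1 k) = (((Finset.Icc 1 (n 1)) ×ˢ ({1} : Finset ℕ)).powerset.filter
          fun A => A.card = k ∧ IsSepMulti n s A ∧ (1,1) ∈ A) by rw [ES, hone]]
      rw [card_circlePointed s n (n 1) k rfl, PC_eq s (n 1) k hs hk h1]
      rw [Finset.Icc_self, Finset.sum_singleton]
    -- inductive step : p ≥ 1, split off circle p+1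
    have hp2 : 2 ≤ p + 1 := by omega
    have hm'k : s * k ≤ n (p+1) := hi (p+1) hp2 (le_refl _)
    set M := ∑ i ∈ Finset.Icc 1 p, n i with hM
    have hMn1 : n 1 ≤ M := by
      apply Finset.single_le_sum (fun i _ => Nat.zero_le (n i))
      simp only [Finset.mem_Icc]
      omega
    have hM1 : s * k + 1 ≤ M := le_trans h1 hMn1
    set circ := (Finset.Icc 1 (n (p+1))) ×ˢ ({p+1} : Finset ℕ) with hcircdef
    have hmapsto : ∀ A ∈ ES s n (p+1) k, A.filter (fun x => x.2 = p+1) ∈ circ.powerset := by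
      intro A hA
      simp only [ES, Finset.mem_filter, Finset.mem_powerset] at hA
      rw [Finset.mem_powerset]
      intro x hx
      rw [Finset.mem_filter] at hx
      obtain ⟨hxA, hxtag⟩ := hx
      have := mem_multiCircles.mp (hA.1 hxA)
      simp only [hcircdef, Finset.mem_product, Finset.mem_Icc, Finset.mem_singleton]
      rw [hxtag] at this
      omega
    have hstep1 : (ES s n (p+1) k).card
        = ∑ B ∈ circ.powerset, ((ES s n (p+1) k).filter
            (fun A => A.filter (fun x => x.2 = p+1) = B)).card :=
      Finset.card_eq_sum_card_fiberwise hmapsto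
    -- vanishing off the good set
    have hvanish : ∀ B ∈ circ.powerset,
        ((ES s n (p+1) k).filter (fun A => A.filter (fun x => x.2 = p+1) = B)).card ≠ 0 →
        (IsSepMulti n s B ∧ B.card < k) := by
      intro B hBp hne
      have hne' : ((ES s n (p+1) k).filter
          (fun A => A.filter (fun x => x.2 = p+1) = B)).Nonempty :=
        Finset.card_pos.mp (Nat.pos_of_ne_zero hne)
      obtain ⟨A, hA⟩ := hne'
      rw [Finset.mem_filter] at hA
      obtain ⟨hAES, hproj⟩ := hA
      simp only [ES, Finset.mem_filter, Finset.mem_powerset] at hAES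
      obtain ⟨hsubA, hcA, hsepA, honeA⟩ := hAES
      have hBA : B ⊆ A := by
        rw [← hproj]; exact Finset.filter_subset _ _
      constructor
      · exact hsepA.subset hBA
      · have hnotB : (1,1) ∉ B := by
          rw [← hproj, Finset.mem_filter]
          rintro ⟨-, h⟩
          simp at h
          omega
        have hss : B ⊂ A := (Finset.ssubset_iff_of_subset hBA).mpr ⟨(1,1), honeA, hnotB⟩
        have := Finset.card_lt_card hss
        omega
    -- sum over good sets only
    have hgoodsum : ∑ B ∈ circ.powerset, ((ES s n (p+1) k).filter
          (fun A => A.filter (fun x => x.2 = p+1) = B)).card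
        = ∑ B ∈ circ.powerset.filter (fun B => IsSepMulti n s B ∧ B.card < k),
            ((ES s n (p+1) k).filter (fun A => A.filter (fun x => x.2 = p+1) = B)).card :=
      (Finset.sum_filter_of_ne hvanish).symm
    -- fibers over good sets are copies of smaller problems
    have hfib : ∀ B ∈ circ.powerset.filter (fun B => IsSepMulti n s B ∧ B.card < k),
        ((ES s n (p+1) k).filter (fun A => A.filter (fun x => x.2 = p+1) = B)).card
          = (ES s n p (k - B.card)).card := by
      intro B hB
      simp only [Finset.mem_filter, Finset.mem_powerset] at hB
      obtain ⟨hBsub, hBsep, hBcard⟩ := hB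
      have hBtag : ∀ x ∈ B, x.2 = p + 1 := by
        intro x hx
        have := hBsub hx
        simp only [hcircdef, Finset.mem_product, Finset.mem_singleton] at this
        exact this.2
      have hBmc : ∀ x ∈ B, x ∈ multiCircles (p+1) n := by
        intro x hx
        have h2 := hBsub hx
        simp only [hcircdef, Finset.mem_product, Finset.mem_Icc, Finset.mem_singleton] at h2
        rw [mem_multiCircles]
        rw [h2.2]
        refine ⟨by omega, by omega, h2.1.1, h2.1.2⟩
      apply Finset.card_nbij' (i := fun A => A.filter (fun x => ¬ x.2 = p+1))
        (j := fun A' => A' ∪ B)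
      · intro A hA
        rw [Finset.mem_coe, Finset.mem_filter] at hA
        obtain ⟨hAES, hproj⟩ := hA
        simp only [Finset.mem_coe, ES, Finset.mem_filter, Finset.mem_powerset] at hAES ⊢
        obtain ⟨hsubA, hcA, hsepA, honeA⟩ := hAES
        refine ⟨?_, ?_, hsepA.subset (Finset.filter_subset _ _), ?_⟩
        · intro x hx
          rw [Finset.mem_filter] at hx
          obtain ⟨hxA, hxtag⟩ := hx
          have := mem_multiCircles.mp (hsubA hxA)
          rw [mem_multiCircles]
          omega
        · have hsplit := Finset.card_filter_add_card_filter_not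
            (s := A) (p := fun x => x.2 = p+1)
          rw [hproj] at hsplit
          omega
        · exact ⟨honeA, by omega⟩
      · intro A' hA'
        simp only [Finset.mem_coe, ES, Finset.mem_filter, Finset.mem_powerset] at hA'
        obtain ⟨hsubA', hcA', hsepA', honeA'⟩ := hA'
        have hA'tag : ∀ x ∈ A', x.2 ≤ p := by
          intro x hx
          exact (mem_multiCircles.mp (hsubA' hx)).2.1
        have hdisj : Disjoint A' B := by
          rw [Finset.disjoint_left]
          intro x hx hxB
          have h1 := hA'tag x hx
          have h2 := hBtag x hxB
          omega
        rw [Finset.mem_coe, Finset.mem_filter]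
        constructor
        · simp only [Finset.mem_coe, ES, Finset.mem_filter, Finset.mem_powerset]
          refine ⟨?_, ?_, ?_, Finset.mem_union_left _ honeA'⟩
          · intro x hx
            rw [Finset.mem_union] at hx
            rcases hx with hx | hx
            · have := mem_multiCircles.mp (hsubA' hx)
              rw [mem_multiCircles]
              omega
            · exact hBmc x hx
          · rw [Finset.card_union_of_disjoint hdisj, hcA']
            omega
          · intro x hx y hy hxy htag
            rw [Finset.mem_union] at hx hy
            rcases hx with hx | hx <;> rcases hy with hy | hy
            · exact hsepA' x hx y hy hxy htag
            · have := hA'tag x hx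
              have := hBtag y hy
              omega
            · have := hA'tag y hy
              have := hBtag x hx
              omega
            · exact hBsep x hx y hy hxy htag
        · rw [Finset.filter_union]
          rw [Finset.filter_false_of_mem (fun x hx => by
            have := hA'tag x hx
            omega)]
          rw [Finset.filter_true_of_mem (fun x hx => hBtag x hx)]
          rw [Finset.empty_union]
      · intro A hA
        rw [Finset.mem_coe, Finset.mem_filter] at hA
        obtain ⟨-, hproj⟩ := hA
        dsimp only
        rw [← hproj, Finset.union_comm, Finset.filter_union_filter_not_eq]
      · intro A' hA'
        simp only [Finset.mem_coe, ES, Finset.mem_filter, Finset.mem_powerset] at hA'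
        obtain ⟨hsubA', -, -, -⟩ := hA'
        have hA'tag : ∀ x ∈ A', x.2 ≤ p := by
          intro x hx
          exact (mem_multiCircles.mp (hsubA' hx)).2.1
        dsimp only
        rw [Finset.filter_union]
        rw [Finset.filter_true_of_mem (fun x hx => by
          have := hA'tag x hx
          omega)]
        rw [Finset.filter_false_of_mem (fun x hx => by
          have := hBtag x hx
          omega)]
        rw [Finset.union_empty]
    -- apply induction hypothesis on each fiber
    have hihval : ∀ B ∈ circ.powerset.filter (fun B => IsSepMulti n s B ∧ B.card < k),
        (ES s n p (k - B.card)).card = (M - s*(k - B.card) - 1).choose ((k - B.card) - 1) := by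
      intro B hB
      simp only [Finset.mem_filter] at hB
      have hb : B.card < k := hB.2.2
      apply ih hppos (k - B.card) (by omega)
      · have : s * (k - B.card) ≤ s * k := Nat.mul_le_mul_left s (by omega)
        omega
      · intro i hi2 hip
        have : s * (k - B.card) ≤ s * k := Nat.mul_le_mul_left s (by omega)
        have := hi i hi2 (by omega)
        omega
    -- group by cardinality
    have hcards : ∀ B ∈ circ.powerset.filter (fun B => IsSepMulti n s B ∧ B.card < k),
        B.card ∈ Finset.range k := by
      intro B hB
      simp only [Finset.mem_filter] at hB
      rw [Finset.mem_range]
      exact hB.2.2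
    have hgroup : ∑ B ∈ circ.powerset.filter (fun B => IsSepMulti n s B ∧ B.card < k),
          (M - s*(k - B.card) - 1).choose ((k - B.card) - 1)
        = ∑ b ∈ Finset.range k,
            ∑ B ∈ (circ.powerset.filter (fun B => IsSepMulti n s B ∧ B.card < k)).filter
              (fun B => B.card = b),
            (M - s*(k - B.card) - 1).choose ((k - B.card) - 1) :=
      (Finset.sum_fiberwise_of_maps_to hcards _).symm
    -- count of good sets with given cardinality
    have hcount : ∀ b ∈ Finset.range k,
        ((circ.powerset.filter (fun B => IsSepMulti n s B ∧ B.card < k)).filter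
          (fun B => B.card = b)).card = CC s (n (p+1)) b := by
      intro b hb
      rw [Finset.mem_range] at hb
      rw [← card_circleSep s n (p+1) (n (p+1)) b rfl]
      congr 1
      ext B
      simp only [Finset.mem_filter, Finset.mem_powerset, hcircdef]
      constructor
      · rintro ⟨⟨hsub, hsep, -⟩, hcard⟩
        exact ⟨hsub, hcard, hsep⟩
      · rintro ⟨hsub, hcard, hsep⟩
        exact ⟨⟨hsub, hsep, by omega⟩, hcard⟩
    -- convert CC to cycF
    have hCCF : ∀ b ∈ Finset.range k, CC s (n (p+1)) b = cycF s (n (p+1)) b := by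
      intro b hb
      rw [Finset.mem_range] at hb
      rcases Nat.eq_zero_or_pos b with rfl | hbpos
      · rw [CC_zero]
        simp [cycF]
      rcases Nat.lt_or_ge b 2 with hb1 | hb2
      · obtain rfl : b = 1 := by omega
        rw [CC_one]
        have hsm : 2 * s ≤ n (p+1) := by
          have : s * 2 ≤ s * k := Nat.mul_le_mul_left s (by omega)
          omega
        unfold cycF
        rw [if_neg (by omega)]
        rw [Nat.mul_one, Nat.choose_one_right]
        rw [show (1:ℕ) - 1 = 0 from rfl, Nat.choose_zero_right]
        omega
      · rw [CC_eq s (n (p+1)) b hs hb2 (by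
          have : s * (b+1) ≤ s * k := Nat.mul_le_mul_left s (by omega)
          omega)]
        unfold cycF
        rw [if_neg (by omega)]
    -- put everything together
    rw [hstep1, hgoodsum]
    rw [Finset.sum_congr rfl (fun B hB => (hfib B hB).trans (hihval B hB))]
    rw [hgroup]
    have hinner : ∀ b ∈ Finset.range k,
        ∑ B ∈ (circ.powerset.filter (fun B => IsSepMulti n s B ∧ B.card < k)).filter
            (fun B => B.card = b),
          (M - s*(k - B.card) - 1).choose ((k - B.card) - 1)
        = cycF s (n (p+1)) b * ((M - s*(k - b) - 1).choose ((k - b) - 1)) := by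
      intro b hb
      rw [Finset.sum_congr rfl (fun B hB => by
        simp only [Finset.mem_filter] at hB
        rw [hB.2])]
      rw [Finset.sum_const, hcount b hb, hCCF b hb, smul_eq_mul]
    rw [Finset.sum_congr rfl hinner]
    have hid := identity_nat s k M (n (p+1)) hs hk hM1 hm'k
    rw [show ∑ b ∈ Finset.range k, cycF s (n (p+1)) b * ((M - s*(k - b) - 1).choose ((k - b) - 1))
        = ∑ b ∈ Finset.range k, ((M - s*(k-b) - 1).choose ((k-b) - 1)) * cycF s (n (p+1)) b from
      Finset.sum_congr rfl (fun b _ => Nat.mul_comm _ _)]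
    rw [hid]
    have hsumsplit : ∑ i ∈ Finset.Icc 1 (p+1), n i = n (p+1) + M := by
      rw [show Finset.Icc 1 (p+1) = insert (p+1) (Finset.Icc 1 p) by
        ext x; simp only [Finset.mem_Icc, Finset.mem_insert]; omega]
      rw [Finset.sum_insert (by simp only [Finset.mem_Icc]; omega)]
    rw [hsumsplit]
    congr 2
    omega
/-- For `p ≥ 1`, `n 1 ≥ sk+1` and `n i ≥ sk` for `2 ≤ i ≤ p`, the number of
`s`-separated `k`-subsets of the disjoint union of `p` circles containing `(1,1)`
is `C(N - sk - 1, k - 1)` where `N = n 1 + ⋯ + n p`. -/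
theorem stmt_7 (p s k : ℕ) (n : ℕ → ℕ) (hp : 1 ≤ p) (hs : 1 ≤ s) (hk : 1 ≤ k)
    (h1 : s * k + 1 ≤ n 1) (hi : ∀ i, 2 ≤ i → i ≤ p → s * k ≤ n i) :
    {A : Finset (ℕ × ℕ) | A ⊆ multiCircles p n ∧ A.card = k ∧
        IsSepMulti n s A ∧ (1, 1) ∈ A}.ncard =
      ((∑ i ∈ Finset.Icc 1 p, n i) - s * k - 1).choose (k - 1) := by
  have hset : {A : Finset (ℕ × ℕ) | A ⊆ multiCircles p n ∧ A.card = k ∧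
      IsSepMulti n s A ∧ (1, 1) ∈ A} = ↑(ES s n p k) := by
    ext A
    simp only [ES, Set.mem_setOf_eq, Finset.mem_coe, Finset.mem_filter, Finset.mem_powerset]
  rw [hset, Set.ncard_coe_finset]
  exact ES_card s hs n p hp k hk h1 hi
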